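/- For any measurable m : Ω → [0,1] with ‖m‖₁ > 0, every volume v of a Dice-optimal segmentation satisfies v ≥ ‖m‖₁², i.e., the set of maximizing volumes of d_m(v) = 2∫₀^v (1 - F_m⁻¹(u)) du / (‖m‖₁ + v) is contained in [‖m‖₁², 1]. -/

import Mathlib

open MeasureTheory Set

noncomputable section

/-- Normalized Lebesgue measure on the unit cube `[0,1]^n`. -/
def cubeMeasure (n : ℕ) : Measure (Fin n → ℝ) :=
  volume.restrict (Set.univ.pi fun _ => Set.Icc (0:ℝ) 1)

/-- A segmentation: a measurable `{0,1}`-valued function on the cube. -/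
def IsSeg {n : ℕ} (s : (Fin n → ℝ) → ℝ) : Prop :=
  Measurable s ∧ ∀ ω, s ω = 0 ∨ s ω = 1

/-- A marginal function: a measurable `[0,1]`-valued function on the cube. -/
def IsMarg {n : ℕ} (m : (Fin n → ℝ) → ℝ) : Prop :=
  Measurable m ∧ ∀ ω, m ω ∈ Set.Icc (0:ℝ) 1

/-- The volume `‖f‖₁ = ∫ f dλ` (for nonnegative `f`). -/
def vol {n : ℕ} (f : (Fin n → ℝ) → ℝ) : ℝ := ∫ ω, f ω ∂(cubeMeasure n)

/-- `F_m(t) = λ({ω : 1 - m(ω) ≤ t})`. -/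
def Fcdf {n : ℕ} (m : (Fin n → ℝ) → ℝ) (t : ℝ) : ℝ :=
  ((cubeMeasure n) {ω | 1 - m ω ≤ t}).toReal

/-- The left limit `F_m(t-) = λ({ω : 1 - m(ω) < t})`. -/
def FcdfMinus {n : ℕ} (m : (Fin n → ℝ) → ℝ) (t : ℝ) : ℝ :=
  ((cubeMeasure n) {ω | 1 - m ω < t}).toReal

/-- The generalized inverse (quantile function) `F_m⁻¹(v) = inf{t ∈ [0,1] : F_m(t) ≥ v}`. -/
def Finv {n : ℕ} (m : (Fin n → ℝ) → ℝ) (v : ℝ) : ℝ :=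
  sInf {t | t ∈ Set.Icc (0:ℝ) 1 ∧ v ≤ Fcdf m t}

/-- The function `d_m`. -/
def dFun {n : ℕ} (m : (Fin n → ℝ) → ℝ) (v : ℝ) : ℝ :=
  2 * (∫ u in (0:ℝ)..v, (1 - Finv m u)) / (vol m + v)

lemma cubeMeasure_univ (n : ℕ) : cubeMeasure n Set.univ = 1 := by
  rw [cubeMeasure, Measure.restrict_apply MeasurableSet.univ, Set.univ_inter,
    MeasureTheory.volume_pi_pi]
  simp [Real.volume_Icc]

instance cubeProb (n : ℕ) : IsProbabilityMeasure (cubeMeasure n) := ⟨cubeMeasure_univ n⟩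

lemma Finv_bddBelow {n : ℕ} (m : (Fin n → ℝ) → ℝ) (v : ℝ) :
    BddBelow {t | t ∈ Set.Icc (0:ℝ) 1 ∧ v ≤ Fcdf m t} :=
  ⟨0, fun _ ht => ht.1.1⟩

lemma Finv_nonneg {n : ℕ} (m : (Fin n → ℝ) → ℝ) (v : ℝ) : 0 ≤ Finv m v :=
  Real.sInf_nonneg (fun _ ht => ht.1.1)

lemma Fcdf_one {n : ℕ} {m : (Fin n → ℝ) → ℝ} (hm : IsMarg m) : Fcdf m 1 = 1 := by
  have : {ω | 1 - m ω ≤ (1:ℝ)} = Set.univ := by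
    ext ω; simp only [mem_setOf_eq, mem_univ, iff_true]; linarith [(hm.2 ω).1]
  rw [Fcdf, this, cubeMeasure_univ]; simp

lemma one_mem_Finv_set {n : ℕ} {m : (Fin n → ℝ) → ℝ} (hm : IsMarg m) {v : ℝ} (hv : v ≤ 1) :
    (1:ℝ) ∈ {t | t ∈ Set.Icc (0:ℝ) 1 ∧ v ≤ Fcdf m t} := by
  refine ⟨⟨zero_le_one, le_rfl⟩, ?_⟩
  rw [Fcdf_one hm]; exact hv

lemma Finv_le_one {n : ℕ} {m : (Fin n → ℝ) → ℝ} (hm : IsMarg m) {v : ℝ} (hv : v ≤ 1) :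
    Finv m v ≤ 1 :=
  csInf_le (Finv_bddBelow m v) (one_mem_Finv_set hm hv)

lemma Finv_le {n : ℕ} {m : (Fin n → ℝ) → ℝ} {s u : ℝ} (hs : s ∈ Set.Icc (0:ℝ) 1)
    (h : u ≤ Fcdf m s) : Finv m u ≤ s :=
  csInf_le (Finv_bddBelow m u) ⟨hs, h⟩

lemma Finv_monoOn {n : ℕ} {m : (Fin n → ℝ) → ℝ} (hm : IsMarg m) :
    MonotoneOn (Finv m) (Set.Iic (1:ℝ)) := by
  intro u _ u' hu' huu'
  exact csInf_le_csInf (Finv_bddBelow m u) ⟨1, one_mem_Finv_set hm hu'⟩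
    (fun t ht => ⟨ht.1, le_trans huu' ht.2⟩)

lemma intervalIntegrable_Finv {n : ℕ} {m : (Fin n → ℝ) → ℝ} (hm : IsMarg m) {v : ℝ}
    (hv0 : 0 ≤ v) (hv1 : v ≤ 1) : IntervalIntegrable (Finv m) volume 0 v := by
  apply MonotoneOn.intervalIntegrable
  apply (Finv_monoOn hm).mono
  rw [Set.uIcc_of_le hv0]
  exact fun x hx => le_trans hx.2 hv1

lemma m_integrable {n : ℕ} {m : (Fin n → ℝ) → ℝ} (hm : IsMarg m) :
    Integrable m (cubeMeasure n) :=
  ⟨hm.1.aestronglyMeasurable, HasFiniteIntegral.of_bounded (C := 1)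
    (ae_of_all _ fun ω => by
      rw [Real.norm_eq_abs, abs_of_nonneg (hm.2 ω).1]; exact (hm.2 ω).2)⟩

lemma integral_Finv_le {n : ℕ} {m : (Fin n → ℝ) → ℝ} (hm : IsMarg m) :
    ∫ u in (0:ℝ)..1, Finv m u ≤ ∫ ω, (1 - m ω) ∂(cubeMeasure n) := by
  set μ := cubeMeasure n with hμ
  set g : (Fin n → ℝ) → ℝ := fun ω => 1 - m ω with hgdef
  have hgmeas : Measurable g := measurable_const.sub hm.1
  have hg0 : ∀ ω, 0 ≤ g ω := fun ω => by
    simp only [hgdef]; linarith [(hm.2 ω).2]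
  have hg1 : ∀ ω, g ω ≤ 1 := fun ω => by
    simp only [hgdef]; linarith [(hm.2 ω).1]
  set h : ℝ → ℝ := fun u => Finv m (min u 1) with hhdef
  have hhmono : Monotone h := fun u u' huu' =>
    Finv_monoOn hm (min_le_right u 1) (min_le_right u' 1) (min_le_min huu' le_rfl)
  have hhmeas : Measurable h := hhmono.measurable
  have hh0 : ∀ u, 0 ≤ h u := fun u => Finv_nonneg m _
  have hh1 : ∀ u, h u ≤ 1 := fun u => Finv_le_one hm (min_le_right u 1)
  set ν : Measure ℝ := volume.restrict (Set.Ioc (0:ℝ) 1) with hν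
  have hsetmeas : ∀ t : ℝ, MeasurableSet {u | t ≤ h u} := fun t => by
    have : {u | t ≤ h u} = h ⁻¹' (Set.Ici t) := rfl
    rw [this]; exact hhmeas measurableSet_Ici
  have key : ∀ t : ℝ, ν {u | t ≤ h u} ≤ μ {ω | t ≤ g ω} := by
    intro t
    rcases le_or_gt t 0 with ht | ht
    · have e1 : {u | t ≤ h u} = Set.univ := eq_univ_of_forall fun u => le_trans ht (hh0 u)
      have e2 : {ω | t ≤ g ω} = Set.univ := eq_univ_of_forall fun ω => le_trans ht (hg0 ω)
      rw [e1, e2, hν, Measure.restrict_apply MeasurableSet.univ, Set.univ_inter,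
        Real.volume_Ioc, measure_univ]
      simp
    rcases le_or_gt t 1 with ht1 | ht1
    · set c : ℝ := (μ {ω | g ω < t}).toReal with hc
      have hgt_meas : MeasurableSet {ω | g ω < t} := measurableSet_lt hgmeas measurable_const
      set sq : ℕ → ℝ := fun k => max 0 (t - 1/(k+1)) with hsq
      have hsk0 : ∀ k : ℕ, (0:ℝ) ≤ sq k := fun k => le_max_left _ _
      have hskt : ∀ k : ℕ, sq k < t := by
        intro k
        have hpos : (0:ℝ) < 1/((k:ℝ)+1) := by positivity
        exact max_lt ht (by linarith)
      have hclaim : ∀ u ∈ Set.Ioc (0:ℝ) 1, t ≤ h u → c ≤ u := by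
        intro u hu htu
        have hmin : min u 1 = u := min_eq_left hu.2
        have htu' : t ≤ Finv m u := by rw [hhdef] at htu; simpa [hmin] using htu
        have hFu : ∀ s, 0 ≤ s → s < t → Fcdf m s ≤ u := by
          intro s hs0 hst
          by_contra hcon
          push_neg at hcon
          have : Finv m u ≤ s := Finv_le ⟨hs0, le_trans hst.le ht1⟩ hcon.le
          linarith
        have hbound : ∀ k : ℕ, μ {ω | g ω ≤ sq k} ≤ ENNReal.ofReal u := by
          intro k
          have h1 : Fcdf m (sq k) ≤ u := hFu _ (hsk0 k) (hskt k)
          rw [Fcdf] at h1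
          have hEq : {ω | g ω ≤ sq k} = {ω | 1 - m ω ≤ sq k} := by
            ext ω; simp [hgdef]
          rw [hEq]
          exact (ENNReal.le_ofReal_iff_toReal_le (measure_ne_top μ _) hu.1.le).2 h1
        have hunion : {ω | g ω < t} = ⋃ k : ℕ, {ω | g ω ≤ sq k} := by
          ext ω
          simp only [mem_setOf_eq, mem_iUnion]
          constructor
          · intro hlt
            obtain ⟨k, hk⟩ := exists_nat_one_div_lt (by linarith : (0:ℝ) < t - g ω)
            exact ⟨k, le_max_of_le_right (by linarith)⟩
          · rintro ⟨k, hk⟩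
            exact lt_of_le_of_lt hk (hskt k)
        have hsqmono : Monotone sq := by
          intro k k' hkk'
          have hcast : ((k:ℝ)+1) ≤ ((k':ℝ)+1) := by
            have : (k:ℝ) ≤ (k':ℝ) := Nat.cast_le.2 hkk'
            linarith
          have h1 : (1:ℝ)/((k':ℝ)+1) ≤ 1/((k:ℝ)+1) :=
            one_div_le_one_div_of_le (by positivity) hcast
          simp only [hsq]
          exact max_le_max le_rfl (by linarith)
        have hmonoseq : Monotone (fun k : ℕ => {ω | g ω ≤ sq k}) := by
          intro k k' hkk' ω hω
          exact le_trans hω (hsqmono hkk')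
        have hμlim : μ {ω | g ω < t} = ⨆ k, μ {ω | g ω ≤ sq k} := by
          rw [hunion]
          exact hmonoseq.directed_le.measure_iUnion
        have hle : μ {ω | g ω < t} ≤ ENNReal.ofReal u := by
          rw [hμlim]; exact iSup_le hbound
        exact ENNReal.toReal_le_of_le_ofReal hu.1.le hle
      have hc0 : 0 ≤ c := ENNReal.toReal_nonneg
      have hcompl : μ {ω | t ≤ g ω} = 1 - μ {ω | g ω < t} := by
        have hEq : {ω | t ≤ g ω} = {ω | g ω < t}ᶜ := by
          ext ω; simp [not_lt]
        rw [hEq, measure_compl hgt_meas (measure_ne_top μ _), measure_univ]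
      calc ν {u | t ≤ h u} = volume ({u | t ≤ h u} ∩ Set.Ioc 0 1) := by
            rw [hν, Measure.restrict_apply (hsetmeas t)]
        _ ≤ volume (Set.Icc c 1) := by
            apply measure_mono
            rintro u ⟨hu1, hu2⟩
            exact ⟨hclaim u hu2 hu1, hu2.2⟩
        _ = ENNReal.ofReal (1 - c) := Real.volume_Icc
        _ = 1 - ENNReal.ofReal c := by
            rw [ENNReal.ofReal_sub 1 hc0, ENNReal.ofReal_one]
        _ = 1 - μ {ω | g ω < t} := by
            rw [hc, ENNReal.ofReal_toReal (measure_ne_top μ _)]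
        _ = μ {ω | t ≤ g ω} := hcompl.symm
    · have hEq : {u | t ≤ h u} = ∅ :=
        eq_empty_of_forall_notMem fun u (hu : t ≤ h u) => by linarith [hh1 u]
      rw [hEq]; simp
  have layer1 : ∫⁻ u, ENNReal.ofReal (h u) ∂ν = ∫⁻ t in Set.Ioi (0:ℝ), ν {u | t ≤ h u} :=
    lintegral_eq_lintegral_meas_le ν (ae_of_all _ hh0) hhmeas.aemeasurable
  have layer2 : ∫⁻ ω, ENNReal.ofReal (g ω) ∂μ = ∫⁻ t in Set.Ioi (0:ℝ), μ {ω | t ≤ g ω} :=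
    lintegral_eq_lintegral_meas_le μ (ae_of_all _ hg0) hgmeas.aemeasurable
  have hlin : ∫⁻ u, ENNReal.ofReal (h u) ∂ν ≤ ∫⁻ ω, ENNReal.ofReal (g ω) ∂μ := by
    rw [layer1, layer2]
    exact lintegral_mono fun t => key t
  have hg_int : Integrable g μ :=
    ⟨hgmeas.aestronglyMeasurable, HasFiniteIntegral.of_bounded (C := 1)
      (ae_of_all _ fun ω => by
        rw [Real.norm_eq_abs, abs_of_nonneg (hg0 ω)]; exact hg1 ω)⟩
  have e1 : ENNReal.ofReal (∫ ω, g ω ∂μ) = ∫⁻ ω, ENNReal.ofReal (g ω) ∂μ :=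
    ofReal_integral_eq_lintegral_ofReal hg_int (ae_of_all _ hg0)
  have heq : Set.EqOn (Finv m) h (Set.Ioc (0:ℝ) 1) := fun u hu => by
    rw [hhdef]; simp [min_eq_left hu.2]
  have e2 : ∫ u in (0:ℝ)..1, Finv m u = (∫⁻ u, ENNReal.ofReal (h u) ∂ν).toReal := by
    rw [intervalIntegral.integral_of_le zero_le_one,
      setIntegral_congr_fun measurableSet_Ioc heq,
      integral_eq_lintegral_of_nonneg_ae (ae_of_all _ hh0) hhmeas.aestronglyMeasurable]
  rw [e2]
  calc (∫⁻ u, ENNReal.ofReal (h u) ∂ν).toReal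
      ≤ (ENNReal.ofReal (∫ ω, g ω ∂μ)).toReal :=
        ENNReal.toReal_mono ENNReal.ofReal_ne_top (e1 ▸ hlin)
    _ = ∫ ω, g ω ∂μ := ENNReal.toReal_ofReal (integral_nonneg hg0)

theorem stmt9 {n : ℕ} {m : (Fin n → ℝ) → ℝ} (hm : IsMarg m) (h0 : 0 < vol m) :
    {v ∈ Set.Icc (0:ℝ) 1 | ∀ w ∈ Set.Icc (0:ℝ) 1, dFun m w ≤ dFun m v} ⊆
      Set.Icc ((vol m) ^ 2) 1 := by
  rintro v ⟨⟨hv0, hv1⟩, hmax⟩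
  refine ⟨?_, hv1⟩
  have hden1 : (0:ℝ) < vol m + 1 := by linarith
  have hdenv : (0:ℝ) < vol m + v := by linarith
  have hIv : (∫ u in (0:ℝ)..v, (1 - Finv m u)) ≤ v := by
    have h1 : (∫ u in (0:ℝ)..v, (1 - Finv m u)) ≤ ∫ u in (0:ℝ)..v, (1:ℝ) := by
      apply intervalIntegral.integral_mono_on hv0
        (intervalIntegrable_const.sub (intervalIntegrable_Finv hm hv0 hv1))
        intervalIntegrable_const
      intro u _
      linarith [Finv_nonneg m u]
    simpa using h1
  have hI1 : vol m ≤ ∫ u in (0:ℝ)..1, (1 - Finv m u) := by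
    have hsub : (∫ u in (0:ℝ)..1, (1 - Finv m u))
        = 1 - ∫ u in (0:ℝ)..1, Finv m u := by
      rw [intervalIntegral.integral_sub intervalIntegrable_const
        (intervalIntegrable_Finv hm zero_le_one le_rfl)]
      simp
    have hkey := integral_Finv_le hm
    have hone : (∫ ω, (1 - m ω) ∂(cubeMeasure n)) = 1 - vol m := by
      rw [integral_sub (integrable_const 1) (m_integrable hm)]
      simp [vol]
    rw [hsub]
    rw [hone] at hkey
    linarith
  have hd1 : 2 * vol m / (vol m + 1) ≤ dFun m 1 := by
    rw [dFun]
    exact (div_le_div_iff_of_pos_right hden1).2 (by linarith)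
  have hdv : dFun m v ≤ 2 * v / (vol m + v) := by
    rw [dFun]
    exact (div_le_div_iff_of_pos_right hdenv).2 (by linarith)
  have hchain : 2 * vol m / (vol m + 1) ≤ 2 * v / (vol m + v) :=
    hd1.trans ((hmax 1 ⟨zero_le_one, le_rfl⟩).trans hdv)
  have hfin := (div_le_div_iff₀ hden1 hdenv).1 hchain
  nlinarith [hfin]
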